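/- With the notation of the previous context, if λ_{s,t} = 1 and 0 < t < α_s, then λ_{s,t+1} = p_s − |C_{p_s^{t+1}}|. -/

import Mathlib

/-- A finite set of congruences `(x, m)` covers all the integers. -/
def CoversAll (S : Finset (ℕ × ℕ)) : Prop :=
  ∀ z : ℤ, ∃ c ∈ S, (c.2 : ℤ) ∣ z - (c.1 : ℤ)

/-- The moduli appearing in `S` are pairwise distinct. -/
def DistinctModuli (S : Finset (ℕ × ℕ)) : Prop :=
  ∀ c ∈ S, ∀ c' ∈ S, c.2 = c'.2 → c = c'

/-- `L` is a covering number: there is a covering system whose moduli are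
distinct divisors of `L` greater than `1`. -/
def IsCoveringNumber (L : ℕ) : Prop :=
  ∃ S : Finset (ℕ × ℕ), CoversAll S ∧ DistinctModuli S ∧
    ∀ c ∈ S, 1 < c.2 ∧ c.2 ∣ L

/-- `L` is a primitive covering number. -/
def IsPrimitiveCoveringNumber (L : ℕ) : Prop :=
  IsCoveringNumber L ∧ ∀ d : ℕ, d ∣ L → d ≠ L → ¬ IsCoveringNumber d

/-- `Cpow C r p s t` is the set of congruences in `C` whose modulus is exactly
divisible by `p s ^ t` and not divisible by `p k` for any `s < k ≤ r`. -/
def Cpow (C : Finset (ℕ × ℕ)) (r : ℕ) (p : ℕ → ℕ) (s t : ℕ) : Finset (ℕ × ℕ) :=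
  C.filter (fun c => p s ^ t ∣ c.2 ∧ ¬ p s ^ (t + 1) ∣ c.2 ∧
    ∀ k ∈ Finset.Ioc s r, ¬ p k ∣ c.2)

/-- The union `⋃_{i<s} ⋃_{j ≤ α i} C_{p_i^j} ∪ ⋃_{j ≤ t} C_{p_s^j}`. -/
def lowerCs (C : Finset (ℕ × ℕ)) (r : ℕ) (p α : ℕ → ℕ) (s t : ℕ) :
    Finset (ℕ × ℕ) :=
  (Finset.Ico 1 s).biUnion
      (fun i => (Finset.Icc 1 (α i)).biUnion (fun j => Cpow C r p i j)) ∪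
    (Finset.Icc 1 t).biUnion (fun j => Cpow C r p s j)

/-- `lam C r p α s t` is `λ_{s,t}`: the number of
`n ∈ {1, …, p_1^{α_1} ⋯ p_{s-1}^{α_{s-1}} p_s^t}` not covered by `lowerCs`. -/
def lam (C : Finset (ℕ × ℕ)) (r : ℕ) (p α : ℕ → ℕ) (s t : ℕ) : ℕ :=
  ((Finset.Icc 1 ((∏ i ∈ Finset.Ico 1 s, p i ^ α i) * p s ^ t)).filter
    (fun n => ∀ c ∈ lowerCs C r p α s t, n % c.2 ≠ c.1 % c.2)).card

/-- A congruence `(x,m)` covers `n` iff `n % m = x % m`. -/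
lemma cover_mod_iff (m x n : ℕ) : (m:ℤ) ∣ (n:ℤ) - (x:ℤ) ↔ n % m = x % m := by
  rw [← Nat.modEq_iff_dvd]
  exact ⟨fun h => h.symm, fun h => h.symm⟩

/-- If `n ∣ Q * p^a` and `p^(j+1) ∤ n` then `n ∣ Q * p^j`. -/
lemma dvd_extract {n Q pp a j : ℕ} (hp : pp.Prime) (hn : n ≠ 0)
    (hdvd : n ∣ Q * pp ^ a) (hj : ¬ pp ^ (j+1) ∣ n) : n ∣ Q * pp ^ j := by
  have hv : pp ^ (n.factorization pp) ∣ n := Nat.ordProj_dvd n pp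
  have hvle : n.factorization pp ≤ j := by
    by_contra h
    exact hj (dvd_trans (pow_dvd_pow pp (by omega)) hv)
  have hu : ¬ pp ∣ (n / pp ^ (n.factorization pp)) := Nat.not_dvd_ordCompl hp hn
  have hud : (n / pp ^ (n.factorization pp)) ∣ Q := by
    have h1 : (n / pp ^ (n.factorization pp)) ∣ Q * pp ^ a :=
      dvd_trans (Nat.ordCompl_dvd n pp) hdvd
    exact (Nat.Coprime.pow_right a
      (((Nat.Prime.coprime_iff_not_dvd hp).mpr hu).symm)).dvd_of_dvd_mul_right h1
  calc n = pp ^ (n.factorization pp) * (n / pp ^ (n.factorization pp)) :=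
        (Nat.ordProj_mul_ordCompl_eq_self n pp).symm
    _ ∣ Q * pp ^ j := by
        rw [mul_comm]
        exact mul_dvd_mul hud (pow_dvd_pow pp hvle)

theorem lambda_step_same_prime
    (r : ℕ) (hr : 2 ≤ r) (p α : ℕ → ℕ)
    (hprime : ∀ i ∈ Finset.Icc 1 r, (p i).Prime)
    (hmono : ∀ i, 1 ≤ i → i < r → p i < p (i + 1))
    (hp1 : p 1 = 2)
    (hcong : ∀ t, 1 ≤ t → t ≤ r - 2 → p (t + 1) % (p t - 1) = 1)
    (hlast : (p (r - 1) - 2) * (p (r - 1) - 3) ≤ p r)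
    (hα : ∀ i, 1 ≤ i → i ≤ r - 2 → α i = (p (i + 1) - 1) / (p i - 1) - 1)
    (hαpenult : α (r - 1) = (p r - 1) / (p (r - 1) - 1))
    (hαlast : α r = 1)
    (C : Finset (ℕ × ℕ))
    (hcov : CoversAll C) (hdist : DistinctModuli C)
    (hmod : ∀ c ∈ C, 1 < c.2 ∧ c.2 ∣ ∏ i ∈ Finset.Icc 1 r, p i ^ α i)
    (hlcm : (C.image Prod.snd).lcm id = ∏ i ∈ Finset.Icc 1 r, p i ^ α i)
    (hmin : ∀ D ⊂ C, ¬ CoversAll D)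
    (s t : ℕ) (hs1 : 1 ≤ s) (hsr : s ≤ r)
    (hlam : lam C r p α s t = 1) (ht0 : 0 < t) (ht : t < α s) :
    lam C r p α s (t + 1) = p s - (Cpow C r p s (t + 1)).card := by
  -- strict monotonicity of `p` on `[1, r]`
  have hlt : ∀ j i, 1 ≤ i → i < j → j ≤ r → p i < p j := by
    intro j
    induction j with
    | zero => intro i h1 hij hjr; omega
    | succ n ih =>
      intro i h1 hij hjr
      rcases Nat.lt_or_ge i n with h | h
      · exact lt_trans (ih i h1 h (by omega)) (hmono n (by omega) (by omega))
      · have : i = n := by omega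
        subst this; exact hmono i h1 (by omega)
  -- `p i` does not divide the product of smaller prime powers
  have hnd : ∀ s' i, 1 ≤ i → i ≤ r → s' ≤ i →
      ¬ p i ∣ ∏ l ∈ Finset.Ico 1 s', p l ^ α l := by
    intro s' i h1 hir hsi hdvd
    have hpi := hprime i (Finset.mem_Icc.mpr ⟨h1, hir⟩)
    obtain ⟨l, hl, hdl⟩ := hpi.prime.exists_mem_finset_dvd hdvd
    rw [Finset.mem_Ico] at hl
    have hpl := hprime l (Finset.mem_Icc.mpr ⟨hl.1, by omega⟩)
    have h2 : p i = p l := (Nat.prime_dvd_prime_iff_eq hpi hpl).mp (hpi.dvd_of_dvd_pow hdl)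
    have := hlt i l hl.1 (by omega) hir
    omega
  have hq : (p s).Prime := hprime s (Finset.mem_Icc.mpr ⟨hs1, hsr⟩)
  have hppos : ∀ i, 1 ≤ i → i ≤ r → 0 < p i :=
    fun i h1 h2 => (hprime i (Finset.mem_Icc.mpr ⟨h1, h2⟩)).pos
  have hPpos : 0 < ∏ i ∈ Finset.Ico 1 s, p i ^ α i := by
    apply Finset.prod_pos
    intro l hl
    rw [Finset.mem_Ico] at hl
    exact pow_pos (hppos l hl.1 (by omega)) _
  set P : ℕ := ∏ i ∈ Finset.Ico 1 s, p i ^ α i with hPdef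
  have hMpos : ∀ u : ℕ, 0 < P * p s ^ u := fun u => Nat.mul_pos hPpos (pow_pos hq.pos u)
  -- moduli of congruences in `Cpow C r p i j` divide `(∏_{l<i} p_l^{α_l}) * p_i^j`
  have hCpowdvd : ∀ i j c, 1 ≤ i → i ≤ r → c ∈ Cpow C r p i j →
      c.2 ∣ (∏ l ∈ Finset.Ico 1 i, p l ^ α l) * p i ^ j := by
    intro i j c h1 hir hc
    rw [Cpow, Finset.mem_filter] at hc
    obtain ⟨hcC, hdj, hnj, hk⟩ := hc
    have hL : c.2 ∣ ∏ l ∈ Finset.Icc 1 r, p l ^ α l := (hmod c hcC).2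
    have hsplit : ∏ l ∈ Finset.Icc 1 r, p l ^ α l
        = ((∏ l ∈ Finset.Ico 1 i, p l ^ α l) * p i ^ α i) *
          ∏ l ∈ Finset.Ioc i r, p l ^ α l := by
      rw [← Finset.Ico_add_one_right_eq_Icc, ← Finset.Ico_add_one_add_one_eq_Ioc,
        ← Finset.prod_Ico_consecutive _ (by omega : 1 ≤ i+1) (by omega : i+1 ≤ r+1),
        Finset.prod_Ico_succ_top h1]
    have hcop : Nat.Coprime c.2 (∏ l ∈ Finset.Ioc i r, p l ^ α l) := by
      apply Nat.Coprime.prod_right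
      intro k hk'
      have hkmem := Finset.mem_Ioc.mp hk'
      have hpk := hprime k (Finset.mem_Icc.mpr ⟨by omega, hkmem.2⟩)
      exact Nat.Coprime.pow_right _ ((hpk.coprime_iff_not_dvd).mpr (hk k hk')).symm
    have hA : c.2 ∣ (∏ l ∈ Finset.Ico 1 i, p l ^ α l) * p i ^ α i := by
      refine hcop.dvd_of_dvd_mul_right ?_
      rw [← hsplit]
      exact hL
    have hc2ne : c.2 ≠ 0 := by have := (hmod c hcC).1; omega
    exact dvd_extract (hprime i (Finset.mem_Icc.mpr ⟨h1, hir⟩)) hc2ne hA hnj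
  -- members of `lowerCs C r p α s t` have moduli dividing `P * p s ^ t`
  have hdvdM : ∀ c ∈ lowerCs C r p α s t, c.2 ∣ P * p s ^ t := by
    intro c hc
    rw [lowerCs, Finset.mem_union] at hc
    rcases hc with hc | hc
    · rw [Finset.mem_biUnion] at hc
      obtain ⟨i, hi, hc⟩ := hc
      rw [Finset.mem_biUnion] at hc
      obtain ⟨j, hj, hc⟩ := hc
      rw [Finset.mem_Ico] at hi
      rw [Finset.mem_Icc] at hj
      have h1 := hCpowdvd i j c hi.1 (by omega) hc
      refine dvd_trans h1 (dvd_trans ?_ (dvd_mul_right P _))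
      have hsplit : P = (∏ l ∈ Finset.Ico 1 i, p l ^ α l) *
          ∏ l ∈ Finset.Ico i s, p l ^ α l :=
        (Finset.prod_Ico_consecutive _ hi.1 (le_of_lt hi.2)).symm
      rw [hsplit]
      refine mul_dvd_mul_left _ (dvd_trans (pow_dvd_pow _ hj.2) ?_)
      exact Finset.dvd_prod_of_mem _ (Finset.mem_Ico.mpr ⟨le_rfl, hi.2⟩)
    · rw [Finset.mem_biUnion] at hc
      obtain ⟨j, hj, hc⟩ := hc
      rw [Finset.mem_Icc] at hj
      exact dvd_trans (hCpowdvd s j c hs1 hsr hc)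
        (mul_dvd_mul_left P (pow_dvd_pow _ hj.2))
  have hdvdM1 : ∀ c ∈ Cpow C r p s (t+1), c.2 ∣ P * p s ^ (t+1) :=
    fun c hc => hCpowdvd s (t+1) c hs1 hsr hc
  -- `lowerCs` and `Cpow` are subsets of `C`
  have hCpowC : ∀ i j c, c ∈ Cpow C r p i j → c ∈ C :=
    fun i j c hc => (Finset.mem_filter.mp hc).1
  have hlowC : ∀ u c, c ∈ lowerCs C r p α s u → c ∈ C := by
    intro u c hc
    rw [lowerCs, Finset.mem_union] at hc
    rcases hc with hc | hc <;> rw [Finset.mem_biUnion] at hc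
    · obtain ⟨i, hi, hc⟩ := hc
      rw [Finset.mem_biUnion] at hc
      obtain ⟨j, hj, hc⟩ := hc
      exact hCpowC i j c hc
    · obtain ⟨j, hj, hc⟩ := hc
      exact hCpowC s j c hc
  -- splitting `lowerCs` at level `t+1`
  have hsplitU : ∀ c, c ∈ lowerCs C r p α s (t+1) ↔
      c ∈ lowerCs C r p α s t ∨ c ∈ Cpow C r p s (t+1) := by
    intro c
    simp only [lowerCs, Finset.mem_union, Finset.mem_biUnion, Finset.mem_Icc]
    constructor
    · rintro (h | ⟨j, ⟨hj1, hj2⟩, hc⟩)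
      · exact Or.inl (Or.inl h)
      · rcases Nat.lt_or_ge j (t+1) with h' | h'
        · exact Or.inl (Or.inr ⟨j, ⟨hj1, by omega⟩, hc⟩)
        · have : j = t + 1 := by omega
          subst this; exact Or.inr hc
    · rintro ((h | ⟨j, hj, hc⟩) | h)
      · exact Or.inl h
      · exact Or.inr ⟨j, ⟨hj.1, by omega⟩, hc⟩
      · exact Or.inr ⟨t+1, ⟨by omega, le_rfl⟩, h⟩
  -- `Cpow C r p s (t+1)` is disjoint from `lowerCs C r p α s t`
  have hdisj : ∀ c ∈ Cpow C r p s (t+1), c ∉ lowerCs C r p α s t := by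
    intro c hc hmem
    rw [Cpow, Finset.mem_filter] at hc
    obtain ⟨hcC, hdj, hnj, hkk⟩ := hc
    rw [lowerCs, Finset.mem_union] at hmem
    rcases hmem with hm | hm <;> rw [Finset.mem_biUnion] at hm
    · obtain ⟨i, hi, hm⟩ := hm
      rw [Finset.mem_biUnion] at hm
      obtain ⟨j, hj, hm⟩ := hm
      rw [Finset.mem_Ico] at hi
      rw [Cpow, Finset.mem_filter] at hm
      have hsIoc : s ∈ Finset.Ioc i r := Finset.mem_Ioc.mpr ⟨hi.2, hsr⟩
      apply hm.2.2.2 s hsIoc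
      exact dvd_trans (dvd_pow_self (p s) (by omega : t + 1 ≠ 0)) hdj
    · obtain ⟨j, hj, hm⟩ := hm
      rw [Finset.mem_Icc] at hj
      rw [Cpow, Finset.mem_filter] at hm
      exact hm.2.2.1 (dvd_trans (pow_dvd_pow _ (by omega : j + 1 ≤ t + 1)) hdj)
  -- the unique uncovered residue at level `t`
  rw [lam, ← hPdef] at hlam
  obtain ⟨n0, hU⟩ := Finset.card_eq_one.mp hlam
  have hn0 : n0 ∈ Finset.Icc 1 (P * p s ^ t) ∧
      ∀ c ∈ lowerCs C r p α s t, n0 % c.2 ≠ c.1 % c.2 :=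
    Finset.mem_filter.mp (hU ▸ Finset.mem_singleton_self n0)
  have hn0b := Finset.mem_Icc.mp hn0.1
  have huniq : ∀ n, n ∈ Finset.Icc 1 (P * p s ^ t) →
      (∀ c ∈ lowerCs C r p α s t, n % c.2 ≠ c.1 % c.2) → n = n0 := by
    intro n h1 h2
    have : n ∈ ({n0} : Finset ℕ) := hU ▸ Finset.mem_filter.mpr ⟨h1, h2⟩
    exact Finset.mem_singleton.mp this
  -- periodicity of being uncovered at level `t`
  have hper : ∀ n n' : ℕ, n % (P * p s ^ t) = n' % (P * p s ^ t) →
      (∀ c ∈ lowerCs C r p α s t, n % c.2 ≠ c.1 % c.2) →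
      (∀ c ∈ lowerCs C r p α s t, n' % c.2 ≠ c.1 % c.2) := by
    intro n n' h hh c hc heq
    have hmq : n % c.2 = n' % c.2 := Nat.ModEq.of_dvd (hdvdM c hc) h
    exact hh c hc (hmq.trans heq)
  -- an uncovered number is `≡ n0` mod `P * p s ^ t`
  have hlift : ∀ n, 1 ≤ n → (∀ c ∈ lowerCs C r p α s t, n % c.2 ≠ c.1 % c.2) →
      n % (P * p s ^ t) = n0 % (P * p s ^ t) := by
    intro n hn1 hunc
    have hM := hMpos t
    have e : n - 1 + 1 = n := by omega
    have hcong2 : ((n-1) % (P * p s ^ t) + 1) % (P * p s ^ t) = n % (P * p s ^ t) := by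
      have h2 := Nat.ModEq.add_right 1 (Nat.mod_modEq (n-1) (P * p s ^ t))
      rwa [e] at h2
    have hrep : (n - 1) % (P * p s ^ t) + 1 ∈ Finset.Icc 1 (P * p s ^ t) := by
      rw [Finset.mem_Icc]
      have := Nat.mod_lt (n-1) hM
      omega
    have huncrep : ∀ c ∈ lowerCs C r p α s t,
        ((n-1) % (P * p s ^ t) + 1) % c.2 ≠ c.1 % c.2 :=
      hper n _ hcong2.symm hunc
    have := huniq _ hrep huncrep
    rw [← this, hcong2]
  -- uncovered numbers in `[1, M_{t+1}]` are exactly the lifts `n0 + k * M_t`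
  have hk_of : ∀ n, n ∈ Finset.Icc 1 (P * p s ^ (t+1)) →
      (∀ c ∈ lowerCs C r p α s t, n % c.2 ≠ c.1 % c.2) →
      ∃ k, k < p s ∧ n = n0 + k * (P * p s ^ t) := by
    intro n hn hunc
    rw [Finset.mem_Icc] at hn
    have hM := hMpos t
    have h1 := hlift n hn.1 hunc
    have hB : P * p s ^ (t+1) = (P * p s ^ t) * p s := by ring
    have hge : n0 ≤ n := by
      by_contra hlt2
      have hd : (P * p s ^ t) ∣ n0 - n := (Nat.modEq_iff_dvd' (by omega)).mp h1
      have := Nat.le_of_dvd (by omega) hd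
      omega
    have hd : (P * p s ^ t) ∣ n - n0 := (Nat.modEq_iff_dvd' hge).mp h1.symm
    obtain ⟨k, hk⟩ := hd
    rw [Nat.mul_comm (P * p s ^ t) k] at hk
    refine ⟨k, ?_, by omega⟩
    by_contra hk2
    have hk3 : p s ≤ k := by omega
    have h5 : (P * p s ^ t) * p s ≤ (P * p s ^ t) * k := Nat.mul_le_mul_left _ hk3
    have h6 : (P * p s ^ t) * k = k * (P * p s ^ t) := Nat.mul_comm _ _
    have h7 : P * p s ^ (t+1) = (P * p s ^ t) * p s := by ring
    omega
  have hin : ∀ k, k < p s →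
      (n0 + k * (P * p s ^ t) ∈ Finset.Icc 1 (P * p s ^ (t+1))) ∧
      (∀ c ∈ lowerCs C r p α s t, (n0 + k * (P * p s ^ t)) % c.2 ≠ c.1 % c.2) := by
    intro k hk
    have hB : P * p s ^ (t+1) = (P * p s ^ t) * p s := by ring
    constructor
    · rw [Finset.mem_Icc]
      constructor
      · omega
      · have h2 : k + 1 ≤ p s := hk
        have h5 : (k+1) * (P * p s ^ t) ≤ p s * (P * p s ^ t) := Nat.mul_le_mul_right _ h2
        have h6 : (k+1) * (P * p s ^ t) = k * (P * p s ^ t) + (P * p s ^ t) := by ring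
        have h7 : p s * (P * p s ^ t) = P * p s ^ (t+1) := by ring
        omega
    · apply hper n0 _ _ hn0.2
      rw [Nat.add_mul_mod_self_right]
  -- each congruence of `C` is needed somewhere
  have hneed : ∀ c ∈ C, ∃ z : ℤ, ((c.2:ℤ) ∣ z - (c.1:ℤ)) ∧
      ∀ c' ∈ C, c' ≠ c → ¬ ((c'.2:ℤ) ∣ z - (c'.1:ℤ)) := by
    intro c hc
    have hnc := hmin _ (Finset.erase_ssubset hc)
    rw [CoversAll] at hnc
    push_neg at hnc
    obtain ⟨z, hz⟩ := hnc
    refine ⟨z, ?_, ?_⟩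
    · obtain ⟨c'', hc'', hd⟩ := hcov z
      have hcc : c'' = c := by
        by_contra hne
        exact hz c'' (Finset.mem_erase.mpr ⟨hne, hc''⟩) hd
      exact hcc ▸ hd
    · intro c' hc' hne hd
      exact hz c' (Finset.mem_erase.mpr ⟨hne, hc'⟩) hd
  -- each congruence in `Cpow C r p s (t+1)` covers exactly one lift, exclusively
  have hcoverlift : ∀ c ∈ Cpow C r p s (t+1), ∃ k, k < p s ∧
      (n0 + k * (P * p s ^ t)) % c.2 = c.1 % c.2 ∧
      ∀ c' ∈ Cpow C r p s (t+1),
        (n0 + k * (P * p s ^ t)) % c'.2 = c'.1 % c'.2 → c' = c := by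
    intro c hc
    obtain ⟨z, hzc, hzu⟩ := hneed c (hCpowC s (t+1) c hc)
    have hBpos : 0 < P * p s ^ (t+1) := hMpos (t+1)
    have hBz : ((P * p s ^ (t+1) : ℕ) : ℤ) ≠ 0 := by exact_mod_cast hBpos.ne'
    set w : ℤ := (z - 1) % ((P * p s ^ (t+1) : ℕ) : ℤ) with hwdef
    have hw0 : 0 ≤ w := Int.emod_nonneg _ hBz
    have hwlt : w < ((P * p s ^ (t+1) : ℕ) : ℤ) := Int.emod_lt_of_pos _ (by exact_mod_cast hBpos)
    set n : ℕ := w.toNat + 1 with hndef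
    have hnz : (n:ℤ) = w + 1 := by
      rw [hndef]
      push_cast [Int.toNat_of_nonneg hw0]
      ring
    have hdzn : ((P * p s ^ (t+1) : ℕ) : ℤ) ∣ z - (n:ℤ) := by
      refine ⟨(z-1) / ((P * p s ^ (t+1) : ℕ) : ℤ), ?_⟩
      have hButil := Int.emod_add_mul_ediv (z-1) ((P * p s ^ (t+1) : ℕ) : ℤ)
      rw [hnz]
      rw [← hwdef] at hButil
      linarith
    have hnmem : n ∈ Finset.Icc 1 (P * p s ^ (t+1)) := by
      rw [Finset.mem_Icc]
      have hlt2 : w.toNat < P * p s ^ (t+1) := by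
        rw [← Int.toNat_lt' (by omega)] at hwlt
        · exact hwlt
      omega
    have hdvdzn : ∀ m : ℕ, m ∣ P * p s ^ (t+1) → (m:ℤ) ∣ z - (n:ℤ) :=
      fun m hm => dvd_trans (by exact_mod_cast hm) hdzn
    have hunc : ∀ c' ∈ lowerCs C r p α s t, n % c'.2 ≠ c'.1 % c'.2 := by
      intro c' hc' heq
      have hne : c' ≠ c := fun h => hdisj c hc (h ▸ hc')
      apply hzu c' (hlowC t c' hc') hne
      have h1 : (c'.2:ℤ) ∣ (n:ℤ) - c'.1 := (cover_mod_iff _ _ _).mpr heq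
      have h2 : (c'.2:ℤ) ∣ z - (n:ℤ) := by
        apply hdvdzn
        exact dvd_trans (hdvdM c' hc') (by rw [pow_succ, ← mul_assoc]; exact dvd_mul_right _ _)
      have he : z - (c'.1:ℤ) = (z - n) + ((n:ℤ) - c'.1) := by ring
      rw [he]
      exact dvd_add h2 h1
    obtain ⟨k, hklt, hkeq⟩ := hk_of n hnmem hunc
    have h2c : (c.2:ℤ) ∣ z - (n:ℤ) := hdvdzn c.2 (hdvdM1 c hc)
    refine ⟨k, hklt, ?_, ?_⟩
    · rw [← hkeq]
      have h1 : (c.2:ℤ) ∣ (n:ℤ) - c.1 := by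
        have he : (n:ℤ) - c.1 = -(z - n) + (z - (c.1:ℤ)) := by ring
        rw [he]
        exact dvd_add (dvd_neg.mpr h2c) hzc
      exact (cover_mod_iff _ _ _).mp h1
    · intro c' hc' heq
      rw [← hkeq] at heq
      by_contra hne
      apply hzu c' (hCpowC s (t+1) c' hc') hne
      have h1 : (c'.2:ℤ) ∣ (n:ℤ) - c'.1 := (cover_mod_iff _ _ _).mpr heq
      have h2 : (c'.2:ℤ) ∣ z - (n:ℤ) := hdvdzn c'.2 (hdvdM1 c' hc')
      have he : z - (c'.1:ℤ) = (z - n) + ((n:ℤ) - c'.1) := by ring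
      rw [he]
      exact dvd_add h2 h1
  -- a congruence in `Cpow C r p s (t+1)` covers at most one lift
  have huniqk : ∀ c ∈ Cpow C r p s (t+1), ∀ k k', k < p s → k' < p s →
      (n0 + k * (P * p s ^ t)) % c.2 = c.1 % c.2 →
      (n0 + k' * (P * p s ^ t)) % c.2 = c.1 % c.2 → k = k' := by
    have key : ∀ c ∈ Cpow C r p s (t+1), ∀ k k', k ≤ k' → k' < p s →
        (n0 + k * (P * p s ^ t)) % c.2 = c.1 % c.2 →
        (n0 + k' * (P * p s ^ t)) % c.2 = c.1 % c.2 → k = k' := by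
      intro c hc k k' hkk hk' h1 h2
      have hcd : p s ^ (t+1) ∣ c.2 := (Finset.mem_filter.mp hc).2.1
      have h12 : (n0 + k * (P * p s ^ t)) % c.2 = (n0 + k' * (P * p s ^ t)) % c.2 :=
        h1.trans h2.symm
      have hle : n0 + k * (P * p s ^ t) ≤ n0 + k' * (P * p s ^ t) := by
        have := Nat.mul_le_mul_right (P * p s ^ t) hkk
        omega
      have hdvd2 : c.2 ∣ (n0 + k' * (P * p s ^ t)) - (n0 + k * (P * p s ^ t)) :=
        (Nat.modEq_iff_dvd' hle).mp h12
      have he : (n0 + k' * (P * p s ^ t)) - (n0 + k * (P * p s ^ t))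
          = (k' - k) * (P * p s ^ t) := by
        rw [Nat.sub_mul]
        rw [Nat.add_sub_add_left]
      rw [he] at hdvd2
      have hd3 : p s ^ t * p s ∣ p s ^ t * ((k' - k) * P) := by
        rw [← pow_succ]
        refine dvd_trans hcd (dvd_trans hdvd2 ?_)
        have : (k' - k) * (P * p s ^ t) = p s ^ t * ((k' - k) * P) := by ring
        rw [this]
      have hd4 : p s ∣ (k' - k) * P :=
        (mul_dvd_mul_iff_left (pow_ne_zero t hq.pos.ne')).mp hd3
      rcases (Nat.Prime.dvd_mul hq).mp hd4 with h | h
      · have hz : k' - k = 0 := by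
          by_contra hne
          have := Nat.le_of_dvd (Nat.pos_of_ne_zero hne) h
          omega
        omega
      · exact absurd h (hnd s s hs1 hsr le_rfl)
    intro c hc k k' hk hk' h1 h2
    rcases le_total k k' with h | h
    · exact key c hc k k' h hk' h1 h2
    · exact (key c hc k' k h hk h2 h1).symm
  -- final counting
  rw [lam, ← hPdef]
  have himg : (Finset.Icc 1 (P * p s ^ (t+1))).filter
        (fun n => ∀ c ∈ lowerCs C r p α s (t+(1:ℕ)), n % c.2 ≠ c.1 % c.2)
      = ((Finset.range (p s)).filter
          (fun k => ∀ c ∈ Cpow C r p s (t+(1:ℕ)),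
            (n0 + k * (P * p s ^ t)) % c.2 ≠ c.1 % c.2)).image
          (fun k => n0 + k * (P * p s ^ t)) := by
    ext n
    simp only [Finset.mem_filter, Finset.mem_image, Finset.mem_range]
    constructor
    · rintro ⟨hmem, hunc⟩
      have hunct : ∀ c ∈ lowerCs C r p α s t, n % c.2 ≠ c.1 % c.2 :=
        fun c hc2 => hunc c ((hsplitU c).mpr (Or.inl hc2))
      obtain ⟨k, hklt, hkeq⟩ := hk_of n hmem hunct
      exact ⟨k, ⟨hklt, fun c hc2 => hkeq ▸ hunc c ((hsplitU c).mpr (Or.inr hc2))⟩, hkeq.symm⟩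
    · rintro ⟨k, ⟨hklt, hkunc⟩, rfl⟩
      refine ⟨(hin k hklt).1, fun c hc2 => ?_⟩
      rcases (hsplitU c).mp hc2 with h | h
      · exact (hin k hklt).2 c h
      · exact hkunc c h
  rw [himg, Finset.card_image_of_injOn (by
    intro a ha b hb h
    simp only at h
    have hM := hMpos t
    have : a * (P * p s ^ t) = b * (P * p s ^ t) := by omega
    exact Nat.eq_of_mul_eq_mul_right hM this)]
  have hsum := Finset.card_filter_add_card_filter_not
    (s := Finset.range (p s))
    (p := fun k => ∀ c ∈ Cpow C r p s (t+(1:ℕ)), (n0 + k * (P * p s ^ t)) % c.2 ≠ c.1 % c.2)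
  have hbad : (Cpow C r p s (t+1)).card =
      ((Finset.range (p s)).filter
        (fun k => ¬ ∀ c ∈ Cpow C r p s (t+(1:ℕ)),
          (n0 + k * (P * p s ^ t)) % c.2 ≠ c.1 % c.2)).card := by
    apply Finset.card_bij (fun c hc => (hcoverlift c hc).choose)
    · intro c hc
      obtain ⟨hklt, hcov2, huq⟩ := (hcoverlift c hc).choose_spec
      rw [Finset.mem_filter, Finset.mem_range]
      exact ⟨hklt, fun hall => hall c hc hcov2⟩
    · intro c1 hc1 c2 hc2 hkeq
      obtain ⟨hklt1, hcov1, huq1⟩ := (hcoverlift c1 hc1).choose_spec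
      obtain ⟨hklt2, hcov2, huq2⟩ := (hcoverlift c2 hc2).choose_spec
      apply huq2 c1 hc1
      rw [← hkeq]
      exact hcov1
    · intro b hb
      rw [Finset.mem_filter, Finset.mem_range] at hb
      obtain ⟨hblt, hnall⟩ := hb
      push_neg at hnall
      obtain ⟨c, hc, hcovb⟩ := hnall
      refine ⟨c, hc, ?_⟩
      obtain ⟨hklt, hcov2, huq⟩ := (hcoverlift c hc).choose_spec
      exact huniqk c hc _ b hklt hblt hcov2 hcovb
  rw [Finset.card_range] at hsum
  omega
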